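/- Let Γ_ε = {y + εh(y)ν(y) : y ∈ Γ_0} be a normal perturbation of a smooth closed curve Γ_0 by a smooth function h, where ν is a smooth transversal vector field. Then the first variation of the unit normal is (d/dε)|_{ε=0} ν_{Γ_ε} = −[h (d_yν[τ_0] · ν_0) + h' (ν · ν_0)] τ_0, where h' is the arclength derivative of h. -/

import Mathlib

open Real
open scoped RealInnerProductSpace

lemma decomp2 (τ ν w : EuclideanSpace ℝ (Fin 2)) (hτ : ‖τ‖ = 1) (hν : ‖ν‖ = 1)
    (hor : ⟪τ, ν⟫ = 0) : w = ⟪w, τ⟫ • τ + ⟪w, ν⟫ • ν := by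
  have hon : Orthonormal ℝ ![τ, ν] := by
    constructor
    · intro i; fin_cases i <;> simpa
    · intro i j hij
      fin_cases i <;> fin_cases j <;> simp_all <;> linarith [real_inner_comm τ ν]
  have hcard : Fintype.card (Fin 2) = Module.finrank ℝ (EuclideanSpace ℝ (Fin 2)) := by simp
  let B := basisOfOrthonormalOfCardEqFinrank hon hcard
  have hB : ⇑B = ![τ, ν] := coe_basisOfOrthonormalOfCardEqFinrank hon hcard
  let OB : OrthonormalBasis (Fin 2) ℝ (EuclideanSpace ℝ (Fin 2)) :=
    B.toOrthonormalBasis (by rwa [hB])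
  have hOB : ⇑OB = ![τ, ν] := by
    rw [Module.Basis.coe_toOrthonormalBasis, hB]
  have := OB.sum_repr' w
  rw [Fin.sum_univ_two, hOB] at this
  simp only [Matrix.cons_val_zero, Matrix.cons_val_one, Matrix.head_cons] at this
  rw [show ⟪w, τ⟫ = ⟪τ, w⟫ from real_inner_comm _ _,
    show ⟪w, ν⟫ = ⟪ν, w⟫ from real_inner_comm _ _]
  exact this.symm

/-- first variation of the unit normal under the normal-type perturbation
`Γ_ε = {γ₀(s) + εh(s)ν(γ₀(s))}` of a closed curve `Γ₀` (arclength parametrization `γ₀`,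
unit tangent `τ₀`, outward unit normal `ν₀`) by a transversal smooth field `ν`:
for a family `N(ε,·)` of unit normals to `Γ_ε` with `N(0,·) = ν₀`,
`(d/dε)|₀ N = −[h (d_yν[τ₀]·ν₀) + h' (ν·ν₀)] τ₀`. -/
theorem first_variation_unit_normal
    (γ₀ τ₀ ν₀ : ℝ → EuclideanSpace ℝ (Fin 2))
    (ν : EuclideanSpace ℝ (Fin 2) → EuclideanSpace ℝ (Fin 2))
    (h : ℝ → ℝ) (N : ℝ → ℝ → EuclideanSpace ℝ (Fin 2))
    (hγ : ∀ s, HasDerivAt γ₀ (τ₀ s) s)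
    (hτunit : ∀ s, ‖τ₀ s‖ = 1) (hνunit : ∀ s, ‖ν₀ s‖ = 1)
    (horth : ∀ s, ⟪τ₀ s, ν₀ s⟫ = 0)
    (hνsm : ContDiff ℝ 1 ν) (hhsm : ContDiff ℝ 1 h)
    (htrans : ∀ s, ⟪ν (γ₀ s), ν₀ s⟫ ≠ 0)
    (hN0 : ∀ s, N 0 s = ν₀ s)
    (hNunit : ∀ ε s, ‖N ε s‖ = 1)
    -- `N(ε,s)` is orthogonal to the tangent vector of `Γ_ε` at `γ₀(s) + εh(s)ν(γ₀(s))`: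
    (hNorth : ∀ ε s, ⟪N ε s,
      τ₀ s + ε • (deriv h s • ν (γ₀ s) + h s • fderiv ℝ ν (γ₀ s) (τ₀ s))⟫ = 0)
    (hNdiff : ∀ s, DifferentiableAt ℝ (fun ε => N ε s) 0) :
    ∀ s, deriv (fun ε => N ε s) 0
      = -(h s * ⟪fderiv ℝ ν (γ₀ s) (τ₀ s), ν₀ s⟫ + deriv h s * ⟪ν (γ₀ s), ν₀ s⟫) • τ₀ s := by
  intro s
  set u : EuclideanSpace ℝ (Fin 2) :=
    deriv h s • ν (γ₀ s) + h s • fderiv ℝ ν (γ₀ s) (τ₀ s) with hu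
  set V := deriv (fun ε => N ε s) 0 with hVdef
  have hNd : HasDerivAt (fun ε => N ε s) V 0 := (hNdiff s).hasDerivAt
  -- ⟪V, ν₀ s⟫ = 0
  have h1 : ⟪V, ν₀ s⟫ = 0 := by
    have hd : HasDerivAt (fun ε => ⟪N ε s, N ε s⟫) (⟪N 0 s, V⟫ + ⟪V, N 0 s⟫) 0 :=
      hNd.inner ℝ hNd
    have hc : HasDerivAt (fun ε => ⟪N ε s, N ε s⟫) 0 0 := by
      have : (fun ε => ⟪N ε s, N ε s⟫) = fun _ => (1 : ℝ) := by
        funext ε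
        rw [real_inner_self_eq_norm_sq, hNunit]
        norm_num
      rw [this]
      exact hasDerivAt_const _ _
    have := hd.unique hc
    rw [hN0] at this
    have hcomm : ⟪V, ν₀ s⟫ = ⟪ν₀ s, V⟫ := real_inner_comm _ _
    linarith
  -- ⟪V, τ₀ s⟫ = -⟪ν₀ s, u⟫
  have h2 : ⟪V, τ₀ s⟫ = -⟪ν₀ s, u⟫ := by
    have hg : HasDerivAt (fun ε : ℝ => τ₀ s + ε • u) u 0 := by
      simpa using (hasDerivAt_id (0:ℝ)).smul_const u |>.const_add (τ₀ s)
    have hd : HasDerivAt (fun ε => ⟪N ε s, τ₀ s + ε • u⟫)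
        (⟪N 0 s, u⟫ + ⟪V, τ₀ s + (0:ℝ) • u⟫) 0 := hNd.inner ℝ hg
    have hc : HasDerivAt (fun ε => ⟪N ε s, τ₀ s + ε • u⟫) 0 0 := by
      have : (fun ε => ⟪N ε s, τ₀ s + ε • u⟫) = fun _ => (0 : ℝ) := by
        funext ε; exact hNorth ε s
      rw [this]; exact hasDerivAt_const _ _
    have := hd.unique hc
    rw [hN0] at this
    simp only [zero_smul, add_zero] at this
    have hcomm : ⟪V, τ₀ s⟫ = ⟪τ₀ s, V⟫ := real_inner_comm _ _
    linarith
  have hdec := decomp2 (τ₀ s) (ν₀ s) V (hτunit s) (hνunit s) (horth s)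
  rw [hdec, h1, h2]
  have hνu : ⟪ν₀ s, u⟫
      = h s * ⟪fderiv ℝ ν (γ₀ s) (τ₀ s), ν₀ s⟫ + deriv h s * ⟪ν (γ₀ s), ν₀ s⟫ := by
    rw [hu, inner_add_right, real_inner_smul_right, real_inner_smul_right,
      real_inner_comm (ν₀ s) (ν (γ₀ s)), real_inner_comm (ν₀ s) (fderiv ℝ ν (γ₀ s) (τ₀ s))]
    ring
  rw [hνu]
  simp
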